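/- For every x ∈ ℝ, the limit lim_{n→∞} (Fⁿ(x) − x)/n exists and equals ln(l1)/ln(l1/l2). In particular the rotation number of F is ρ(F) = ln(l1)/ln(l1/l2). -/

import Mathlib

/-- The piecewise linear circle map `F`, defined on `[0,1)` by
`F(x) = l1*x + F0` for `0 ≤ x ≤ x0` and `F(x) = l2*x + F0 + 1 - l2` for `x0 < x < 1`,
extended to ℝ by `F(x+1) = F(x) + 1`. -/
noncomputable def Fmap (l1 l2 F0 x0 : ℝ) (x : ℝ) : ℝ :=
  (if Int.fract x ≤ x0 then l1 * Int.fract x + F0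
   else l2 * Int.fract x + F0 + 1 - l2) + (⌊x⌋ : ℝ)

open Real Filter

/-- Main auxiliary lemma: under purely algebraic hypotheses on `l1, l2, F0, x0, b`,
the limit of `(Fⁿ(x)-x)/n` is `log l1 / log (l1/l2)`. -/
lemma aux_tendsto (l1 l2 F0 x0 b : ℝ) (hl1 : 0 < l1) (hl2 : 0 < l2)
    (hbb : F0 + b = l1 * b) (hb2 : F0 - l2 + b = l2 * b) (hxx : l1 * x0 + F0 = 1)
    (hxx' : l2 * x0 + F0 = l2)
    (hF0nn : 0 ≤ F0) (hF0lt : F0 < 1)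
    (hd : Real.log l1 - Real.log l2 ≠ 0)
    (hbne : ∀ t : ℝ, 0 ≤ t → t ≤ 1 → t + b ≠ 0) :
    ∀ x : ℝ, Tendsto (fun n : ℕ => ((Fmap l1 l2 F0 x0)^[n] x - x) / (n : ℝ))
      atTop (nhds (Real.log l1 / Real.log (l1 / l2))) := by
  set d : ℝ := Real.log l1 - Real.log l2 with hd_def
  set ρ : ℝ := Real.log l1 / d with hρ_def
  set h : ℝ → ℝ := fun y => Real.log (Int.fract y + b) / d + (⌊y⌋ : ℝ) with hh_def
  -- shift property
  have hshift : ∀ (v : ℝ) (k : ℤ), h (v + k) = h v + k := by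
    intro v k
    simp only [hh_def, Int.fract_add_intCast, Int.floor_add_intCast]
    push_cast
    ring
  -- value of h on [0,1]
  have h1 : ∀ v : ℝ, 0 ≤ v → v ≤ 1 → h v = Real.log (v + b) / d := by
    intro v hv0 hv1
    rcases lt_or_eq_of_le hv1 with hv | hv
    · simp only [hh_def]
      rw [Int.fract_eq_self.mpr ⟨hv0, hv⟩, Int.floor_eq_zero_iff.mpr ⟨hv0, hv⟩]
      simp
    · subst hv
      simp only [hh_def, Int.fract_one, Int.floor_one]
      have hb0 : b ≠ 0 := by have := hbne 0 le_rfl zero_le_one; simpa using this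
      have hb1 : (1 : ℝ) + b ≠ 0 := hbne 1 zero_le_one le_rfl
      have hlb : l1 * b = l2 * (1 + b) := by nlinarith [hbb, hb2]
      have : Real.log l1 + Real.log b = Real.log l2 + Real.log (1 + b) := by
        rw [← Real.log_mul (ne_of_gt hl1) hb0, ← Real.log_mul (ne_of_gt hl2) hb1, hlb]
      have hlog : Real.log (1 + b) = Real.log b + d := by
        rw [hd_def]; linarith
      rw [zero_add, hlog]
      field_simp
      simp
  -- the semiconjugacy equation
  have h2 : ∀ y : ℝ, h (Fmap l1 l2 F0 x0 y) = h y + ρ := by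
    intro y
    set t : ℝ := Int.fract y with ht_def
    have ht0 : 0 ≤ t := Int.fract_nonneg y
    have ht1 : t < 1 := Int.fract_lt_one y
    have htb : t + b ≠ 0 := hbne t ht0 ht1.le
    have hy : h y = Real.log (t + b) / d + (⌊y⌋ : ℝ) := rfl
    unfold Fmap
    rw [← ht_def]
    split_ifs with hc
    · -- first branch
      have hv0 : 0 ≤ l1 * t + F0 := by nlinarith
      have hv1 : l1 * t + F0 ≤ 1 := by nlinarith
      rw [hshift (l1 * t + F0) ⌊y⌋, h1 _ hv0 hv1]
      have : l1 * t + F0 + b = l1 * (t + b) := by nlinarith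
      rw [this, Real.log_mul (ne_of_gt hl1) htb, hy, hρ_def]
      ring
    · -- second branch
      push_neg at hc
      have hw0 : 0 ≤ l2 * t + F0 - l2 := by nlinarith
      have hw1 : l2 * t + F0 - l2 ≤ 1 := by nlinarith
      have heq : l2 * t + F0 + 1 - l2 + (⌊y⌋ : ℝ) = (l2 * t + F0 - l2) + ((1 + ⌊y⌋ : ℤ) : ℝ) := by
        push_cast; ring
      rw [heq, hshift (l2 * t + F0 - l2) (1 + ⌊y⌋), h1 _ hw0 hw1]
      have : l2 * t + F0 - l2 + b = l2 * (t + b) := by nlinarith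
      rw [this, Real.log_mul (ne_of_gt hl2) htb, hy, hρ_def]
      have : Real.log l2 / d + 1 = Real.log l1 / d := by
        field_simp [hd_def]
        linarith
      push_cast
      field_simp
      ring
  -- iterated semiconjugacy
  have h3 : ∀ (n : ℕ) (x : ℝ), h ((Fmap l1 l2 F0 x0)^[n] x) = h x + n * ρ := by
    intro n
    induction n with
    | zero => intro x; simp
    | succ m ih =>
        intro x
        rw [Function.iterate_succ_apply', h2, ih]
        push_cast
        ring
  -- bound on |h y - y|
  have hg : ContinuousOn (fun t : ℝ => Real.log (t + b) / d - t) (Set.Icc 0 1) := by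
    apply ContinuousOn.sub _ continuousOn_id
    apply ContinuousOn.div_const
    apply ContinuousOn.log
    · exact (continuous_id.add continuous_const).continuousOn
    · intro t ht
      exact hbne t ht.1 ht.2
  obtain ⟨C, hC⟩ := (isCompact_Icc).exists_bound_of_continuousOn hg
  have hdiff : ∀ y : ℝ, |h y - y| ≤ C := by
    intro y
    have : h y - y = Real.log (Int.fract y + b) / d - Int.fract y := by
      simp only [hh_def, Int.fract]
      ring
    rw [this]
    have := hC (Int.fract y) ⟨Int.fract_nonneg y, (Int.fract_lt_one y).le⟩
    simpa using this
  -- conclusion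
  intro x
  have key : ∀ n : ℕ, |(Fmap l1 l2 F0 x0)^[n] x - x - n * ρ| ≤ 2 * C := by
    intro n
    have heq : (Fmap l1 l2 F0 x0)^[n] x - x - n * ρ =
        ((Fmap l1 l2 F0 x0)^[n] x - h ((Fmap l1 l2 F0 x0)^[n] x)) + (h x - x) := by
      rw [h3 n x]; ring
    rw [heq]
    calc |((Fmap l1 l2 F0 x0)^[n] x - h ((Fmap l1 l2 F0 x0)^[n] x)) + (h x - x)|
        ≤ |(Fmap l1 l2 F0 x0)^[n] x - h ((Fmap l1 l2 F0 x0)^[n] x)| + |h x - x| := abs_add_le _ _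
      _ ≤ C + C := by
          gcongr
          · rw [abs_sub_comm]; exact hdiff _
          · exact hdiff _
      _ = 2 * C := by ring
  have hbnd : ∀ᶠ n : ℕ in atTop,
      ‖((Fmap l1 l2 F0 x0)^[n] x - x) / (n : ℝ) - ρ‖ ≤ 2 * C / (n : ℝ) := by
    filter_upwards [eventually_ge_atTop 1] with n hn
    have hn0 : (0 : ℝ) < (n : ℝ) := by exact_mod_cast hn
    have heq2 : ((Fmap l1 l2 F0 x0)^[n] x - x) / (n : ℝ) - ρ =
        ((Fmap l1 l2 F0 x0)^[n] x - x - n * ρ) / n := by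
      field_simp
    rw [Real.norm_eq_abs, heq2, abs_div, abs_of_pos hn0]
    gcongr
    exact key n
  have hzero : Tendsto (fun n : ℕ => ((Fmap l1 l2 F0 x0)^[n] x - x) / (n : ℝ) - ρ)
      atTop (nhds 0) :=
    squeeze_zero_norm' hbnd (tendsto_const_div_atTop_nhds_zero_nat (2 * C))
  have hfinal := hzero.add_const ρ
  simp only [sub_add_cancel, zero_add] at hfinal
  have hdiv : Real.log (l1 / l2) = d := Real.log_div (ne_of_gt hl1) (ne_of_gt hl2)
  rw [hdiv]
  exact hfinal

/-- for every `x`, `(Fⁿ(x) - x)/n` converges to `ln l1 / ln (l1/l2)`;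
in particular the rotation number of `F` is `ρ(F) = ln l1 / ln (l1/l2)`. -/
theorem stmt2 (α β : ℝ) (hα : α ∈ Set.Ioo (-1 : ℝ) 1) (hβ : β ∈ Set.Ioo (-1 : ℝ) 1)
    (hαβ : α ≠ β) (hsign : (β < 0 ∧ 0 < α) ∨ (α < 0 ∧ 0 < β))
    (l1 l2 F0 x0 : ℝ)
    (hl1 : l1 = (1 + α) / (1 - α)) (hl2 : l2 = (1 + β) / (1 - β))
    (hF0 : F0 = l2 * (l1 - 1) / (l1 - l2)) (hx0 : x0 = (1 - l2) / (l1 - l2)) :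
    ∀ x : ℝ, Filter.Tendsto (fun n : ℕ => ((Fmap l1 l2 F0 x0)^[n] x - x) / (n : ℝ))
      Filter.atTop (nhds (Real.log l1 / Real.log (l1 / l2))) := by
  obtain ⟨hα1, hα2⟩ := hα
  obtain ⟨hβ1, hβ2⟩ := hβ
  have hα3 : (0:ℝ) < 1 - α := by linarith
  have hβ3 : (0:ℝ) < 1 - β := by linarith
  have hl1pos : 0 < l1 := by rw [hl1]; exact div_pos (by linarith) hα3
  have hl2pos : 0 < l2 := by rw [hl2]; exact div_pos (by linarith) hβ3
  rcases hsign with ⟨hβ0, hα0⟩ | ⟨hα0, hβ0⟩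
  · -- β < 0 < α : l2 < 1 < l1
    have h1 : 1 < l1 := by rw [hl1, lt_div_iff₀ hα3]; linarith
    have h2 : l2 < 1 := by rw [hl2, div_lt_one hβ3]; linarith
    have hden : (0:ℝ) < l1 - l2 := by linarith
    have hdne : l1 - l2 ≠ 0 := ne_of_gt hden
    have hprod : F0 * (l1 - l2) = l2 * (l1 - 1) := by rw [hF0]; field_simp
    have hbpos : 0 < l2 / (l1 - l2) := div_pos hl2pos hden
    refine aux_tendsto l1 l2 F0 x0 (l2 / (l1 - l2)) hl1pos hl2pos ?_ ?_ ?_ ?_ ?_ ?_ ?_ ?_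
    · rw [hF0]; field_simp; ring
    · rw [hF0]; field_simp; ring
    · rw [hF0, hx0]; field_simp; ring
    · rw [hF0, hx0]; field_simp; ring
    · nlinarith
    · nlinarith
    · have := Real.log_pos h1
      have := Real.log_neg hl2pos h2
      intro hcon; linarith
    · intro t ht0 ht1
      have : 0 < t + l2 / (l1 - l2) := by linarith
      exact ne_of_gt this
  · -- α < 0 < β : l1 < 1 < l2
    have h1 : l1 < 1 := by rw [hl1, div_lt_one hα3]; linarith
    have h2 : 1 < l2 := by rw [hl2, lt_div_iff₀ hβ3]; linarith
    have hden : l1 - l2 < 0 := by linarith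
    have hdne : l1 - l2 ≠ 0 := ne_of_lt hden
    have hprod : F0 * (l1 - l2) = l2 * (l1 - 1) := by rw [hF0]; field_simp
    have hb1 : 1 + l2 / (l1 - l2) < 0 := by
      rw [show 1 + l2 / (l1 - l2) = l1 / (l1 - l2) from by field_simp; ring]
      exact div_neg_of_pos_of_neg hl1pos hden
    refine aux_tendsto l1 l2 F0 x0 (l2 / (l1 - l2)) hl1pos hl2pos ?_ ?_ ?_ ?_ ?_ ?_ ?_ ?_
    · rw [hF0]; field_simp; ring
    · rw [hF0]; field_simp; ring
    · rw [hF0, hx0]; field_simp; ring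
    · rw [hF0, hx0]; field_simp; ring
    · nlinarith
    · nlinarith
    · have := Real.log_neg hl1pos h1
      have := Real.log_pos h2
      intro hcon; linarith
    · intro t ht0 ht1
      have : t + l2 / (l1 - l2) < 0 := by linarith
      exact ne_of_lt this
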